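/- Let k ≥ 1 and 0 ≤ m ≤ k−1, and let γ be the cyclic permutation of {1,…,2k} given by γ(r) = r+1 for r < 2k and γ(2k) = 1. Then the number of non-crossing pair partitions π of {1,…,2k} such that γ∘π has exactly m+1 cycles consisting entirely of odd numbers equals the number of non-crossing partitions of {1,…,k} having exactly k−m blocks. -/

import Mathlib

noncomputable section

/-- A non-crossing set partition of `Fin k`, encoded as its finset of blocks. -/
def IsNCPartition {k : ℕ} (P : Finset (Finset (Fin k))) : Prop :=
  (∀ V ∈ P, V.Nonempty) ∧
  (∀ x : Fin k, ∃! V : Finset (Fin k), V ∈ P ∧ x ∈ V) ∧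
  ¬ ∃ a b c d : Fin k, a < b ∧ b < c ∧ c < d ∧
      ∃ V ∈ P, ∃ W ∈ P, V ≠ W ∧ a ∈ V ∧ c ∈ V ∧ b ∈ W ∧ d ∈ W

open Classical in
/-- The finset of all non-crossing partitions of `{1, …, k}` (as `Fin k`). -/
def NCset (k : ℕ) : Finset (Finset (Finset (Fin k))) :=
  Finset.univ.filter IsNCPartition

/-- A non-crossing pair partition of `Fin m`: a fixed-point-free involution with no
crossing `a < b < c < d`, `π a = c`, `π b = d`. -/
def IsNCPairPartition {m : ℕ} (π : Equiv.Perm (Fin m)) : Prop :=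
  (∀ r, π r ≠ r) ∧ (∀ r, π (π r) = r) ∧
  ¬ ∃ a b c d : Fin m, a < b ∧ b < c ∧ c < d ∧ π a = c ∧ π b = d

open Classical in
/-- The finset of all non-crossing pair partitions of `{1, …, m}` (as `Fin m`). -/
def NC2 (m : ℕ) : Finset (Equiv.Perm (Fin m)) :=
  Finset.univ.filter IsNCPairPartition

/-- The set of cycles (orbits, including fixed points) of a permutation. -/
def permCycles {m : ℕ} (σ : Equiv.Perm (Fin m)) : Set (Set (Fin m)) :=
  {c : Set (Fin m) | ∃ x : Fin m, c = {y : Fin m | σ.SameCycle x y}}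

namespace Stmt16Aux

open Finset Equiv Equiv.Perm

/-- cyclic open interval membership at the level of natural number values:
`z` lies strictly between `a` and `b` going cyclically upward from `a`. -/
def Cyc (a b z : ℕ) : Prop := (a < z ∧ z < b) ∨ (b ≤ a ∧ a < z) ∨ (b ≤ a ∧ z < b)

lemma finRotate_val {n : ℕ} (y : Fin n) :
    ((finRotate n) y).val = if y.val + 1 = n then 0 else y.val + 1 := by
  obtain ⟨m, rfl⟩ : ∃ m, n = m + 1 := ⟨n - 1, by have := y.isLt; omega⟩
  rw [coe_finRotate]
  by_cases h : y = Fin.last m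
  · rw [if_pos h, if_pos (by rw [h]; simp [Fin.last])]
  · have hv : y.val ≠ m := fun hv => h (Fin.ext hv)
    rw [if_neg h, if_neg (by omega)]

lemma sameCycle_equivariant {α β : Type*} (τ : Perm α) (σ : Perm β) (e : α → β)
    (he : Function.Injective e) (hcom : ∀ i, σ (e i) = e (τ i)) (i j : α) :
    σ.SameCycle (e i) (e j) ↔ τ.SameCycle i j := by
  have hinv : ∀ i, σ⁻¹ (e i) = e (τ⁻¹ i) := by
    intro i
    have h1 := hcom (τ⁻¹ i)
    rw [← Equiv.Perm.mul_apply, mul_inv_cancel, Equiv.Perm.one_apply] at h1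
    rw [← h1, ← Equiv.Perm.mul_apply, inv_mul_cancel, Equiv.Perm.one_apply]
  have hz : ∀ (z : ℤ) (i : α), (σ ^ z) (e i) = e ((τ ^ z) i) := by
    intro z
    induction z using Int.induction_on with
    | zero => simp
    | succ n ih =>
        intro i
        have : ((n : ℤ) + 1) = (n : ℤ) + 1 := rfl
        rw [zpow_add_one, zpow_add_one, Equiv.Perm.mul_apply, Equiv.Perm.mul_apply,
          hcom, ih]
    | pred n ih =>
        intro i
        rw [zpow_sub_one, zpow_sub_one, Equiv.Perm.mul_apply, Equiv.Perm.mul_apply,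
          hinv, ih]
  constructor
  · rintro ⟨z, hzz⟩
    exact ⟨z, he (by rw [← hz z i, hzz])⟩
  · rintro ⟨z, hzz⟩
    exact ⟨z, by rw [hz z i, hzz]⟩

variable {k : ℕ}

/-- odd positions -/
def eo {k : ℕ} (i : Fin k) : Fin (2*k) := ⟨2*i.val+1, by have := i.isLt; omega⟩

lemma eo_inj : Function.Injective (eo (k := k)) := by
  intro a b h
  have : 2*a.val+1 = 2*b.val+1 := congrArg Fin.val h
  exact Fin.ext (by omega)

open Classical in
/-- the block of `x` in `P` -/
def blk (P : Finset (Finset (Fin k))) (x : Fin k) : Finset (Fin k) :=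
  Finset.univ.filter (fun y => ∃ V ∈ P, x ∈ V ∧ y ∈ V)

/-- cyclic successor within the block -/
def nxt (P : Finset (Finset (Fin k))) (x : Fin k) : Fin k :=
  if h : ((blk P x).filter (fun y => x < y)).Nonempty then
    ((blk P x).filter (fun y => x < y)).min' h
  else if h2 : (blk P x).Nonempty then (blk P x).min' h2 else x

/-- cyclic predecessor within the block -/
def prv (P : Finset (Finset (Fin k))) (x : Fin k) : Fin k :=
  if h : ((blk P x).filter (fun y => y < x)).Nonempty then
    ((blk P x).filter (fun y => y < x)).max' h
  else if h2 : (blk P x).Nonempty then (blk P x).max' h2 else x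

section partitionFacts

variable {P : Finset (Finset (Fin k))}

lemma blk_eq_of_mem (hP : IsNCPartition P) {V : Finset (Fin k)} {x : Fin k} (hV : V ∈ P) (hx : x ∈ V) :
    blk P x = V := by
  obtain ⟨W, ⟨hW, hxW⟩, huniq⟩ := hP.2.1 x
  have hVW : V = W := huniq V ⟨hV, hx⟩
  subst hVW
  ext y
  simp only [blk, mem_filter, mem_univ, true_and]
  constructor
  · rintro ⟨U, hU, hxU, hyU⟩
    rwa [huniq U ⟨hU, hxU⟩] at hyU
  · intro hy
    exact ⟨V, hV, hx, hy⟩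

lemma mem_blk_self (hP : IsNCPartition P) (x : Fin k) : x ∈ blk P x := by
  obtain ⟨W, ⟨hW, hxW⟩, _⟩ := hP.2.1 x
  rw [blk_eq_of_mem hP hW hxW]; exact hxW

lemma blk_mem (hP : IsNCPartition P) (x : Fin k) : blk P x ∈ P := by
  obtain ⟨W, ⟨hW, hxW⟩, _⟩ := hP.2.1 x
  rw [blk_eq_of_mem hP hW hxW]; exact hW

lemma blk_eq_blk (hP : IsNCPartition P) {x y : Fin k} (h : y ∈ blk P x) : blk P y = blk P x :=
  blk_eq_of_mem hP (blk_mem hP x) h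

lemma blk_disjoint (hP : IsNCPartition P) {V W : Finset (Fin k)} (hV : V ∈ P) (hW : W ∈ P) {x : Fin k}
    (hxV : x ∈ V) (hxW : x ∈ W) : V = W := by
  obtain ⟨U, _, huniq⟩ := hP.2.1 x
  rw [huniq V ⟨hV, hxV⟩, huniq W ⟨hW, hxW⟩]

lemma nxt_mem (hP : IsNCPartition P) (x : Fin k) : nxt P x ∈ blk P x := by
  unfold nxt
  split
  · next h => have := Finset.min'_mem _ h; exact (Finset.mem_filter.1 this).1
  · rw [dif_pos ⟨x, mem_blk_self hP x⟩]
    exact Finset.min'_mem _ _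

lemma prv_mem (hP : IsNCPartition P) (x : Fin k) : prv P x ∈ blk P x := by
  unfold prv
  split
  · next h => have := Finset.max'_mem _ h; exact (Finset.mem_filter.1 this).1
  · rw [dif_pos ⟨x, mem_blk_self hP x⟩]
    exact Finset.max'_mem _ _

/-- if `x < nxt x` then `nxt x` is the least block element above `x`. -/
lemma nxt_lt_spec (hP : IsNCPartition P) {x : Fin k} (h : x < nxt P x) :
    ∀ y ∈ blk P x, x < y → nxt P x ≤ y := by
  intro y hy hxy
  have hne : ((blk P x).filter (fun w => x < w)).Nonempty :=
    ⟨y, Finset.mem_filter.2 ⟨hy, hxy⟩⟩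
  unfold nxt
  rw [dif_pos hne]
  exact Finset.min'_le _ _ (Finset.mem_filter.2 ⟨hy, hxy⟩)

/-- if `nxt x ≤ x` then `x` is the maximum and `nxt x` the minimum of the block. -/
lemma nxt_le_spec (hP : IsNCPartition P) {x : Fin k} (h : nxt P x ≤ x) :
    (∀ y ∈ blk P x, y ≤ x) ∧ (∀ y ∈ blk P x, nxt P x ≤ y) := by
  have hemp : ¬ ((blk P x).filter (fun y => x < y)).Nonempty := by
    intro hne
    have h1 : x < nxt P x := by
      unfold nxt
      rw [dif_pos hne]
      exact (Finset.mem_filter.1 (Finset.min'_mem _ hne)).2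
    exact absurd h (not_le.2 h1)
  constructor
  · intro y hy
    by_contra hxy
    exact hemp ⟨y, Finset.mem_filter.2 ⟨hy, not_le.1 hxy⟩⟩
  · intro y hy
    unfold nxt
    rw [dif_neg hemp, dif_pos ⟨x, mem_blk_self hP x⟩]
    exact Finset.min'_le _ _ hy

lemma prv_gt_spec (hP : IsNCPartition P) {x : Fin k} (h : prv P x < x) :
    ∀ y ∈ blk P x, y < x → y ≤ prv P x := by
  intro y hy hxy
  have hne : ((blk P x).filter (fun w => w < x)).Nonempty :=
    ⟨y, Finset.mem_filter.2 ⟨hy, hxy⟩⟩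
  unfold prv
  rw [dif_pos hne]
  have hmem : y ∈ (blk P x).filter (fun w => w < x) := Finset.mem_filter.2 ⟨hy, hxy⟩
  exact Finset.le_max' _ _ hmem

lemma prv_ge_spec (hP : IsNCPartition P) {x : Fin k} (h : x ≤ prv P x) :
    (∀ y ∈ blk P x, x ≤ y) ∧ (∀ y ∈ blk P x, y ≤ prv P x) := by
  have hemp : ¬ ((blk P x).filter (fun y => y < x)).Nonempty := by
    intro hne
    have h1 : prv P x < x := by
      unfold prv
      rw [dif_pos hne]
      exact (Finset.mem_filter.1 (Finset.max'_mem _ hne)).2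
    exact absurd h (not_le.2 h1)
  constructor
  · intro y hy
    by_contra hxy
    exact hemp ⟨y, Finset.mem_filter.2 ⟨hy, not_le.1 hxy⟩⟩
  · intro y hy
    unfold prv
    rw [dif_neg hemp, dif_pos ⟨x, mem_blk_self hP x⟩]
    exact Finset.le_max' _ _ hy

lemma blk_nxt (hP : IsNCPartition P) (x : Fin k) : blk P (nxt P x) = blk P x :=
  blk_eq_blk hP (nxt_mem hP x)

lemma blk_prv (hP : IsNCPartition P) (x : Fin k) : blk P (prv P x) = blk P x :=
  blk_eq_blk hP (prv_mem hP x)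

lemma prv_nxt (hP : IsNCPartition P) (x : Fin k) : prv P (nxt P x) = x := by
  rcases lt_or_ge x (nxt P x) with h | h
  · -- x is the largest block element below nxt x
    have hbl := blk_nxt hP x
    have hxm : x ∈ (blk P (nxt P x)).filter (fun y => y < nxt P x) := by
      rw [hbl]; exact Finset.mem_filter.2 ⟨mem_blk_self hP x, h⟩
    have hne : ((blk P (nxt P x)).filter (fun y => y < nxt P x)).Nonempty := ⟨x, hxm⟩
    unfold prv
    rw [dif_pos hne]
    apply le_antisymm
    · apply Finset.max'_le
      intro y hy
      rw [hbl] at hy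
      rcases Finset.mem_filter.1 hy with ⟨hy1, hy2⟩
      by_contra hyx
      exact absurd (nxt_lt_spec hP h y hy1 (not_le.1 hyx)) (not_le.2 hy2)
    · exact Finset.le_max' _ _ hxm
  · -- nxt x = min, x = max
    obtain ⟨hmax, hmin⟩ := nxt_le_spec hP h
    have hbl := blk_nxt hP x
    have hemp : ¬ ((blk P (nxt P x)).filter (fun y => y < nxt P x)).Nonempty := by
      rintro ⟨y, hy⟩
      rw [hbl] at hy
      rcases Finset.mem_filter.1 hy with ⟨hy1, hy2⟩
      exact absurd (hmin y hy1) (not_le.2 hy2)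
    unfold prv
    rw [dif_neg hemp, dif_pos (by rw [hbl]; exact ⟨x, mem_blk_self hP x⟩)]
    apply le_antisymm
    · apply Finset.max'_le
      intro y hy
      rw [hbl] at hy
      exact hmax y hy
    · exact Finset.le_max' _ _ (by rw [hbl]; exact mem_blk_self hP x)

lemma nxt_prv (hP : IsNCPartition P) (x : Fin k) : nxt P (prv P x) = x := by
  rcases lt_or_ge (prv P x) x with h | h
  · have hbl := blk_prv hP x
    have hxm : x ∈ (blk P (prv P x)).filter (fun y => prv P x < y) := by
      rw [hbl]; exact Finset.mem_filter.2 ⟨mem_blk_self hP x, h⟩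
    have hne : ((blk P (prv P x)).filter (fun y => prv P x < y)).Nonempty := ⟨x, hxm⟩
    unfold nxt
    rw [dif_pos hne]
    apply le_antisymm
    · exact Finset.min'_le _ _ hxm
    · apply Finset.le_min'
      intro y hy
      rw [hbl] at hy
      rcases Finset.mem_filter.1 hy with ⟨hy1, hy2⟩
      by_contra hyx
      exact absurd (prv_gt_spec hP h y hy1 (not_le.1 hyx)) (not_le.2 hy2)
  · obtain ⟨hmin, hmax⟩ := prv_ge_spec hP h
    have hbl := blk_prv hP x
    have hemp : ¬ ((blk P (prv P x)).filter (fun y => prv P x < y)).Nonempty := by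
      rintro ⟨y, hy⟩
      rw [hbl] at hy
      rcases Finset.mem_filter.1 hy with ⟨hy1, hy2⟩
      exact absurd (hmax y hy1) (not_le.2 hy2)
    unfold nxt
    rw [dif_neg hemp, dif_pos (by rw [hbl]; exact ⟨x, mem_blk_self hP x⟩)]
    apply le_antisymm
    · apply Finset.min'_le
      rw [hbl]; exact mem_blk_self hP x
    · apply Finset.le_min'
      intro y hy
      rw [hbl] at hy
      exact hmin y hy

/-- the cyclic-successor permutation attached to a partition -/
def npPerm (P : Finset (Finset (Fin k))) (hP : IsNCPartition P) : Perm (Fin k) :=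
  ⟨nxt P, prv P, prv_nxt hP, nxt_prv hP⟩

lemma npPerm_apply (hP : IsNCPartition P) (x : Fin k) : npPerm P hP x = nxt P x := rfl

/-- orbits of `npPerm` are exactly the blocks -/
lemma sameCycle_np_iff (hP : IsNCPartition P) (x y : Fin k) :
    (npPerm P hP).SameCycle x y ↔ y ∈ blk P x := by
  constructor
  · rintro ⟨z, rfl⟩
    -- powers of npPerm stay in the block
    suffices h : ∀ (z : ℤ), ((npPerm P hP) ^ z) x ∈ blk P x by exact h z
    intro z
    induction z using Int.induction_on with
    | zero => simpa using mem_blk_self hP x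
    | succ n ih =>
        have h1 : ((n:ℤ)+1) = 1 + (n:ℤ) := by ring
        rw [h1, zpow_add, zpow_one, Equiv.Perm.mul_apply]
        have h2 := nxt_mem hP (((npPerm P hP) ^ (n:ℤ)) x)
        rw [blk_eq_blk hP ih] at h2
        exact h2
    | pred n ih =>
        have h1 : (-(n:ℤ)-1) = -1 + (-(n:ℤ)) := by ring
        rw [h1, zpow_add, zpow_neg_one, Equiv.Perm.mul_apply]
        have h2 := prv_mem hP (((npPerm P hP) ^ (-(n:ℤ))) x)
        rw [blk_eq_blk hP ih] at h2
        exact h2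
  · intro hy
    have hne : (blk P x).Nonempty := ⟨x, mem_blk_self hP x⟩
    set μ := (blk P x).min' hne with hμ
    have hμmem : μ ∈ blk P x := Finset.min'_mem _ hne
    have key : ∀ (t : ℕ) (y : Fin k), y ∈ blk P x → y.val = t →
        (npPerm P hP).SameCycle μ y := by
      intro t
      induction t using Nat.strong_induction_on with
      | _ t ih =>
        intro y hy hyt
        by_cases hmin : ∃ z ∈ blk P x, z < y
        · obtain ⟨z, hz, hzy⟩ := hmin
          have hblk : blk P y = blk P x := blk_eq_blk hP hy
          have hpv : prv P y < y := by
            have hm : z ∈ (blk P y).filter (fun w => w < y) := by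
              rw [hblk]; exact Finset.mem_filter.2 ⟨hz, hzy⟩
            have hne2 : ((blk P y).filter (fun w => w < y)).Nonempty := ⟨z, hm⟩
            unfold prv
            rw [dif_pos hne2]
            exact (Finset.mem_filter.1 (Finset.max'_mem _ hne2)).2
          have hpb : prv P y ∈ blk P x := by
            have := prv_mem hP y; rwa [hblk] at this
          have hsc : (npPerm P hP).SameCycle μ (prv P y) :=
            ih (prv P y).val (by omega) _ hpb rfl
          have hstep : npPerm P hP (prv P y) = y := nxt_prv hP y
          exact hsc.trans ⟨1, by simpa using hstep⟩
        · push_neg at hmin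
          have : y = μ := by
            apply le_antisymm
            · by_contra hlt
              exact absurd (hmin μ hμmem) (by simpa using (not_le.1 hlt))
            · exact Finset.min'_le _ _ hy
          rw [this]
    have h1 := key x.val x (mem_blk_self hP x) rfl
    have h2 := key y.val y hy rfl
    exact h1.symm.trans h2

end partitionFacts

section NC2side

variable {k : ℕ} {π : Equiv.Perm (Fin (2*k))}

lemma sigma_val (π : Equiv.Perm (Fin (2*k))) (x : Fin (2*k)) :
    ((finRotate (2*k) * π) x).val = if (π x).val + 1 = 2*k then 0 else (π x).val + 1 := by
  have h : (finRotate (2*k) * π) x = finRotate (2*k) (π x) := rfl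
  rw [h, finRotate_val]

lemma pair_parity_lt (hπ : IsNCPairPartition π) {x : Fin (2*k)} (hx : x < π x) :
    (π x).val % 2 ≠ x.val % 2 := by
  classical
  set I := Finset.Ioo x (π x) with hI
  have hinv : ∀ z ∈ I, π z ∈ I := by
    intro z hz
    rw [hI, Finset.mem_Ioo] at hz
    obtain ⟨hz1, hz2⟩ := hz
    have hzx : z ≠ x := ne_of_gt hz1
    have hzpx : z ≠ π x := ne_of_lt hz2
    have h1 : π z ≠ x := by
      intro h
      have : z = π x := by rw [← hπ.2.1 z, h]
      exact hzpx this
    have h2 : π z ≠ π x := fun h => hzx (π.injective h)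
    have h3 : π z ≠ z := hπ.1 z
    rw [hI, Finset.mem_Ioo]
    by_contra hcon
    push_neg at hcon
    rcases lt_trichotomy (π z) x with hlt | heq | hgt
    · exact hπ.2.2 ⟨π z, x, z, π x, hlt, hz1, hz2, hπ.2.1 z, rfl⟩
    · exact h1 heq
    · have h4 : π x < π z := lt_of_le_of_ne (hcon hgt) (Ne.symm h2)
      exact hπ.2.2 ⟨x, z, π x, π z, hz1, hz2, h4, rfl, rfl⟩
  -- |I| is even
  have hAB : (I.filter (fun z => z < π z)).card = (I.filter (fun z => ¬ z < π z)).card := by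
    apply Finset.card_bij (fun z _ => π z)
    · intro z hz
      rcases Finset.mem_filter.1 hz with ⟨hzI, hzlt⟩
      refine Finset.mem_filter.2 ⟨hinv z hzI, ?_⟩
      rw [hπ.2.1 z]
      exact not_lt.2 (le_of_lt hzlt)
    · intro a ha b hb hab
      exact π.injective hab
    · intro b hb
      rcases Finset.mem_filter.1 hb with ⟨hbI, hblt⟩
      have h5 : π b < b := lt_of_le_of_ne (not_lt.1 hblt) (hπ.1 b)
      exact ⟨π b, Finset.mem_filter.2 ⟨hinv b hbI, by rw [hπ.2.1 b]; exact h5⟩, hπ.2.1 b⟩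
  have hcardI : I.card = 2 * (I.filter (fun z => z < π z)).card := by
    have := Finset.card_filter_add_card_filter_not (s := I)
      (p := fun z => z < π z)
    omega
  have hIval : I.card = (π x).val - x.val - 1 := by
    rw [hI, Fin.card_Ioo]
  have hxlt : x.val < (π x).val := hx
  omega

lemma pair_parity (hπ : IsNCPairPartition π) (x : Fin (2*k)) :
    (π x).val % 2 ≠ x.val % 2 := by
  rcases lt_trichotomy x (π x) with h | h | h
  · exact pair_parity_lt hπ h
  · exact absurd h.symm (hπ.1 x)
  · have h2 : π x < π (π x) := by rw [hπ.2.1 x]; exact h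
    have := pair_parity_lt hπ h2
    rw [hπ.2.1 x] at this
    exact fun hc => this hc.symm

lemma sigma_parity (hπ : IsNCPairPartition π) (x : Fin (2*k)) :
    ((finRotate (2*k) * π) x).val % 2 = x.val % 2 := by
  have h1 := pair_parity hπ x
  have h2 := sigma_val π x
  have h3 := (π x).isLt
  have h4 := x.isLt
  split at h2 <;> omega

/-- THE structural lemma: every cycle of `γπ` is traversed in increasing cyclic
order: no element of the cycle of `y` lies cyclically strictly between `y` and `σ y`. -/
lemma no_between (hπ : IsNCPairPartition π) (y z : Fin (2*k))
    (hsc : (finRotate (2*k) * π).SameCycle y z) (hzy : z ≠ y) :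
    ¬ Cyc y.val ((finRotate (2*k) * π) y).val z.val := by
  classical
  intro hcyc
  set σ := finRotate (2*k) * π with hσ
  by_cases hfix : σ y = y
  · obtain ⟨i, hi⟩ := hsc
    rw [Equiv.Perm.zpow_apply_eq_self_of_apply_eq_self hfix i] at hi
    exact hzy hi.symm
  · set J := Finset.univ.filter (fun w : Fin (2*k) => Cyc y.val (σ y).val w.val) with hJ
    have hSY : (σ y).val = if (π y).val + 1 = 2*k then 0 else (π y).val + 1 := sigma_val π y
    have hPYy : (π y).val ≠ y.val := fun h => hπ.1 y (Fin.ext h)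
    have hfix' : (σ y).val ≠ y.val := fun h => hfix (Fin.ext h)
    have hbY := y.isLt
    have hbPY := (π y).isLt
    have hJinv : ∀ w ∈ J, σ w ∈ J := by
      intro w hw
      have hwc : Cyc y.val (σ y).val w.val := (Finset.mem_filter.1 hw).2
      have hwny : w ≠ y := by
        intro h
        rw [h] at hwc
        unfold Cyc at hwc
        omega
      have hbW := w.isLt
      have hbPW := (π w).isLt
      have hSW : (σ w).val = if (π w).val + 1 = 2*k then 0 else (π w).val + 1 := sigma_val π w
      by_cases hwpy : w = π y
      · -- σ w = y ⊕ 1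
        have hPW : (π w).val = y.val := by rw [hwpy, hπ.2.1 y]
        have hW : w.val = (π y).val := by rw [hwpy]
        refine Finset.mem_filter.2 ⟨Finset.mem_univ _, ?_⟩
        unfold Cyc at *
        split at hSY <;> split at hSW <;> omega
      · have hWPY : w.val ≠ (π y).val := fun h => hwpy (Fin.ext h)
        have hPWy : (π w).val ≠ y.val := by
          intro h
          apply hwpy
          have h2 : π w = y := Fin.ext h
          exact (hπ.2.1 w).symm.trans (congrArg π h2)
        have hPWPY : (π w).val ≠ (π y).val := fun h => hwny (π.injective (Fin.ext h))
        have hPWW : (π w).val ≠ w.val := fun h => hπ.1 w (Fin.ext h)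
        have hZI : Cyc y.val (π y).val w.val := by
          unfold Cyc at *
          split at hSY <;> omega
        have hPZ : Cyc y.val (π y).val (π w).val := by
          by_contra hPZn
          rcases lt_trichotomy y.val (π y).val with hyp | hyp | hyp
          · -- linear case: y < w < π y
            have hrange : y.val < w.val ∧ w.val < (π y).val := by
              unfold Cyc at hZI; omega
            have hout : (π w).val < y.val ∨ (π y).val < (π w).val := by
              unfold Cyc at hPZn; omega
            rcases hout with hout | hout
            · exact hπ.2.2 ⟨π w, y, w, π y, hout, hrange.1, hrange.2, hπ.2.1 w, rfl⟩
            · exact hπ.2.2 ⟨y, w, π y, π w, hrange.1, hrange.2, hout, rfl, rfl⟩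
          · exact hPYy hyp.symm
          · -- wrap case: π y < y
            have hmid : (π y).val < (π w).val ∧ (π w).val < y.val := by
              unfold Cyc at hPZn; omega
            have hrange : w.val < (π y).val ∨ y.val < w.val := by
              unfold Cyc at hZI; omega
            rcases hrange with hout | hout
            · exact hπ.2.2 ⟨w, π y, π w, y, hout, hmid.1, hmid.2, rfl, hπ.2.1 y⟩
            · exact hπ.2.2 ⟨π y, π w, y, w, hmid.1, hmid.2, hout, hπ.2.1 y, hπ.2.1 w⟩
        refine Finset.mem_filter.2 ⟨Finset.mem_univ _, ?_⟩
        unfold Cyc at *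
        split at hSY <;> split at hSW <;> omega
    have hstay : ∀ n : ℕ, (σ ^ n) z ∈ J := by
      intro n
      induction n with
      | zero =>
          refine Finset.mem_filter.2 ⟨Finset.mem_univ _, ?_⟩
          simpa using hcyc
      | succ n ih =>
          rw [pow_succ', Equiv.Perm.mul_apply]
          exact hJinv _ ih
    obtain ⟨i, _, hi⟩ := (hsc.symm).exists_pow_eq'
    have hyJ : y ∈ J := hi ▸ hstay i
    have : Cyc y.val (σ y).val y.val := (Finset.mem_filter.1 hyJ).2
    unfold Cyc at this
    omega

lemma sameCycle_parity (hπ : IsNCPairPartition π) {x z : Fin (2*k)}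
    (h : (finRotate (2*k) * π).SameCycle x z) : z.val % 2 = x.val % 2 := by
  set σ := finRotate (2*k) * π with hσ
  have key : ∀ (i : ℤ) (x : Fin (2*k)), ((σ ^ i) x).val % 2 = x.val % 2 := by
    intro i
    have hinvp : ∀ x : Fin (2*k), (σ⁻¹ x).val % 2 = x.val % 2 := by
      intro x
      have := sigma_parity hπ (σ⁻¹ x)
      rw [← hσ, ← Equiv.Perm.mul_apply, mul_inv_cancel, Equiv.Perm.one_apply] at this
      exact this.symm
    induction i using Int.induction_on with
    | zero => simp
    | succ n ih =>
        intro x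
        have h1 : ((n:ℤ)+1) = 1 + (n:ℤ) := by ring
        rw [h1, zpow_add, zpow_one, Equiv.Perm.mul_apply]
        rw [← hσ] at *
        rw [sigma_parity hπ _, ih]
    | pred n ih =>
        intro x
        have h1 : (-(n:ℤ)-1) = -1 + (-(n:ℤ)) := by ring
        rw [h1, zpow_add, zpow_neg_one, Equiv.Perm.mul_apply, hinvp, ih]
  obtain ⟨i, hi⟩ := h
  rw [← hi]
  exact key i x

lemma sameCycle_fixed (σ : Equiv.Perm (Fin (2*k))) {x z : Fin (2*k)}
    (hfix : σ x = x) (h : σ.SameCycle x z) : z = x := by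
  obtain ⟨i, hi⟩ := h
  rw [Equiv.Perm.zpow_apply_eq_self_of_apply_eq_self hfix i] at hi
  exact hi.symm

/-- in each cycle there is a unique weak descent -/
lemma desc_unique (hπ : IsNCPairPartition π) {x₁ x₂ : Fin (2*k)}
    (hsc : (finRotate (2*k) * π).SameCycle x₁ x₂)
    (h1 : ((finRotate (2*k) * π) x₁).val ≤ x₁.val)
    (h2 : ((finRotate (2*k) * π) x₂).val ≤ x₂.val) : x₁ = x₂ := by
  set σ := finRotate (2*k) * π with hσ
  rcases lt_trichotomy x₁ x₂ with h | h | h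
  · by_cases hfix : σ x₁ = x₁
    · exact (sameCycle_fixed σ hfix hsc).symm
    · exfalso
      apply no_between hπ x₁ x₂ hsc (ne_of_gt h)
      have hne : (σ x₁).val ≠ x₁.val := fun hh => hfix (Fin.ext hh)
      have h1' : (σ x₁).val ≤ x₁.val := h1
      unfold Cyc
      have hlt : x₁.val < x₂.val := h
      show Cyc x₁.val (σ x₁).val x₂.val
      unfold Cyc
      omega
  · exact h
  · by_cases hfix : σ x₂ = x₂
    · exact sameCycle_fixed σ hfix hsc.symm
    · exfalso
      apply no_between hπ x₂ x₁ hsc.symm (ne_of_gt h)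
      have hne : (σ x₂).val ≠ x₂.val := fun hh => hfix (Fin.ext hh)
      have h2' : (σ x₂).val ≤ x₂.val := h2
      unfold Cyc
      have hlt : x₂.val < x₁.val := h
      show Cyc x₂.val (σ x₂).val x₁.val
      unfold Cyc
      omega

open Classical in
/-- the descent set of `γπ` on positions of parity `p` -/
def descSet (k : ℕ) (π : Equiv.Perm (Fin (2*k))) (p : ℕ) : Finset (Fin (2*k)) :=
  Finset.univ.filter (fun x => x.val % 2 = p ∧ ((finRotate (2*k) * π) x).val ≤ x.val)

lemma cycles_ncard (hπ : IsNCPairPartition π) :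
    {c : Set (Fin (2 * k)) |
        c ∈ permCycles (finRotate (2 * k) * π) ∧
        ∀ y ∈ c, (y : ℕ) % 2 = 0}.ncard = (descSet k π 0).card := by
  classical
  set σ := finRotate (2*k) * π with hσ
  set g : Fin (2*k) → Set (Fin (2*k)) := fun x => {z | σ.SameCycle x z} with hg
  have himg : {c : Set (Fin (2 * k)) | c ∈ permCycles σ ∧ ∀ y ∈ c, (y : ℕ) % 2 = 0}
      = g '' (descSet k π 0) := by
    ext c
    constructor
    · rintro ⟨⟨x₀, rfl⟩, hall⟩
      have hne : (Finset.univ.filter (fun z => σ.SameCycle x₀ z)).Nonempty :=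
        ⟨x₀, Finset.mem_filter.2 ⟨Finset.mem_univ _, Equiv.Perm.SameCycle.refl σ x₀⟩⟩
      set M := (Finset.univ.filter (fun z => σ.SameCycle x₀ z)).max' hne with hM
      have hMsc : σ.SameCycle x₀ M :=
        (Finset.mem_filter.1 (Finset.max'_mem _ hne)).2
      have hMdesc : (σ M).val ≤ M.val := by
        have : σ M ∈ Finset.univ.filter (fun z => σ.SameCycle x₀ z) := by
          refine Finset.mem_filter.2 ⟨Finset.mem_univ _, hMsc.trans ⟨1, by simp⟩⟩
        exact Finset.le_max' _ _ this
      refine ⟨M, ?_, ?_⟩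
      · refine Finset.mem_coe.2 (Finset.mem_filter.2 ⟨Finset.mem_univ _, ?_, hMdesc⟩)
        exact hall M hMsc
      · ext z
        simp only [hg, Set.mem_setOf_eq]
        exact ⟨fun h => hMsc.trans h, fun h => hMsc.symm.trans h⟩
    · rintro ⟨x, hx, rfl⟩
      rcases Finset.mem_filter.1 (Finset.mem_coe.1 hx) with ⟨-, hpar, hdesc⟩
      refine ⟨⟨x, rfl⟩, ?_⟩
      intro y hy
      have : σ.SameCycle x y := hy
      rw [sameCycle_parity hπ this, hpar]
  rw [himg]
  rw [Set.ncard_image_of_injOn, Set.ncard_coe_finset]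
  intro x₁ h₁ x₂ h₂ heq
  rcases Finset.mem_filter.1 (Finset.mem_coe.1 h₁) with ⟨-, -, hd₁⟩
  rcases Finset.mem_filter.1 (Finset.mem_coe.1 h₂) with ⟨-, -, hd₂⟩
  have hsc : σ.SameCycle x₁ x₂ := by
    have : x₂ ∈ g x₂ := Equiv.Perm.SameCycle.refl σ x₂
    rw [← heq] at this
    exact this
  exact desc_unique hπ hsc hd₁ hd₂

lemma desc_total (hπ : IsNCPairPartition π) (hk : 0 < k) :
    (descSet k π 0).card + (descSet k π 1).card = k + 1 := by
  classical
  set σ := finRotate (2*k) * π with hσ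
  set D := Finset.univ.filter (fun x : Fin (2*k) => (σ x).val ≤ x.val) with hD
  have hA : descSet k π 0 = D.filter (fun x => x.val % 2 = 0) := by
    ext x
    simp only [descSet, hD, Finset.mem_filter, Finset.mem_univ, true_and, ← hσ]
    tauto
  have hB : descSet k π 1 = D.filter (fun x => ¬ x.val % 2 = 0) := by
    ext x
    simp only [descSet, hD, Finset.mem_filter, Finset.mem_univ, true_and, ← hσ]
    constructor
    · rintro ⟨h1, h2⟩; exact ⟨h2, by omega⟩
    · rintro ⟨h1, h2⟩; exact ⟨by omega, h1⟩
  have hsplit := Finset.card_filter_add_card_filter_not (s := D)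
    (p := fun x => x.val % 2 = 0)
  -- now compute D.card = k + 1
  have hw : (2*k-1) < 2*k := by omega
  set lst : Fin (2*k) := ⟨2*k-1, hw⟩ with hlst
  set w₀ := π lst with hw₀
  set D1 := Finset.univ.filter (fun x : Fin (2*k) => (π x).val < x.val) with hD1
  have hDins : D = insert w₀ D1 := by
    ext x
    simp only [hD, hD1, Finset.mem_insert, Finset.mem_filter, Finset.mem_univ, true_and]
    have hsv := sigma_val π x
    rw [← hσ] at hsv
    constructor
    · intro h
      by_cases hc : (π x).val + 1 = 2*k
      · left
        have : π x = lst := Fin.ext (by simp [hlst]; omega)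
        rw [hw₀, ← this, hπ.2.1 x]
      · right
        rw [hsv, if_neg hc] at h
        omega
    · intro h
      rcases h with h | h
      · have hpx : π x = lst := by rw [h, hw₀, hπ.2.1 lst]
        rw [hsv, hpx]
        have hlv : lst.val + 1 = 2*k := by
          show (2*k-1) + 1 = 2*k
          omega
        rw [if_pos hlv]
        omega
      · rw [hsv]
        split <;> omega
  have hw₀n : w₀ ∉ D1 := by
    simp only [hD1, Finset.mem_filter, Finset.mem_univ, true_and, not_lt]
    rw [hw₀, hπ.2.1 lst]
    have := w₀.isLt
    simp only [hlst]
    have := (π lst).isLt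
    omega
  have hDcard : D.card = D1.card + 1 := by
    rw [hDins, Finset.card_insert_of_notMem hw₀n]
  -- D1.card = k
  have hbij : D1.card = (Finset.univ.filter (fun x : Fin (2*k) => x.val < (π x).val)).card := by
    apply Finset.card_bij (fun x _ => π x)
    · intro a ha
      rcases Finset.mem_filter.1 ha with ⟨-, h⟩
      refine Finset.mem_filter.2 ⟨Finset.mem_univ _, ?_⟩
      rw [hπ.2.1 a]
      exact h
    · intro a _ b _ hab
      exact π.injective hab
    · intro b hb
      rcases Finset.mem_filter.1 hb with ⟨-, h⟩
      refine ⟨π b, Finset.mem_filter.2 ⟨Finset.mem_univ _, ?_⟩, hπ.2.1 b⟩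
      rw [hπ.2.1 b]
      exact h
  have hcompl := Finset.card_filter_add_card_filter_not (s := (Finset.univ : Finset (Fin (2*k))))
    (p := fun x => (π x).val < x.val)
  have hcomp2 : (Finset.univ.filter (fun x : Fin (2*k) => ¬ (π x).val < x.val)).card
      = (Finset.univ.filter (fun x : Fin (2*k) => x.val < (π x).val)).card := by
    congr 1
    ext x
    simp only [Finset.mem_filter, Finset.mem_univ, true_and]
    have : (π x).val ≠ x.val := fun h => hπ.1 x (Fin.ext h)
    omega
  have huniv : (Finset.univ : Finset (Fin (2*k))).card = 2*k := by
    simp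
  have hA' := congrArg Finset.card hA
  have hB' := congrArg Finset.card hB
  have hD1card : D1.card
      = (Finset.univ.filter (fun x : Fin (2*k) => (π x).val < x.val)).card := by
    rw [hD1]
  omega

end NC2side

section blockCount

variable {k : ℕ} {P : Finset (Finset (Fin k))}

open Classical in
lemma card_blocks (hP : IsNCPartition P) :
    P.card = (Finset.univ.filter (fun i : Fin k => nxt P i ≤ i)).card := by
  classical
  apply Finset.card_bij (fun V hV => V.max' (hP.1 V hV))
  · intro V hV
    set M := V.max' (hP.1 V hV) with hM
    have hMm : M ∈ V := Finset.max'_mem _ _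
    have hblk : blk P M = V := blk_eq_of_mem hP hV hMm
    refine Finset.mem_filter.2 ⟨Finset.mem_univ _, ?_⟩
    have hemp : ¬ ((blk P M).filter (fun y => M < y)).Nonempty := by
      rintro ⟨y, hy⟩
      rcases Finset.mem_filter.1 hy with ⟨hy1, hy2⟩
      rw [hblk] at hy1
      exact absurd (Finset.le_max' V y hy1) (not_le.2 hy2)
    unfold nxt
    rw [dif_neg hemp, dif_pos ⟨M, mem_blk_self hP M⟩]
    exact Finset.min'_le _ _ (mem_blk_self hP M)
  · intro V hV W hW hVW
    exact blk_disjoint hP hV hW (Finset.max'_mem V (hP.1 V hV))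
      (hVW ▸ Finset.max'_mem W (hP.1 W hW))
  · intro i hi
    rcases Finset.mem_filter.1 hi with ⟨-, hdesc⟩
    refine ⟨blk P i, blk_mem hP i, ?_⟩
    apply le_antisymm
    · apply Finset.max'_le
      intro y hy
      exact (nxt_le_spec hP hdesc).1 y hy
    · exact Finset.le_max' _ _ (mem_blk_self hP i)

end blockCount

section psi

variable {k : ℕ} {P : Finset (Finset (Fin k))}

/-- even positions -/
def ee {k : ℕ} (i : Fin k) : Fin (2*k) := ⟨2*i.val, by have := i.isLt; omega⟩

/-- halving map -/
def dv {k : ℕ} (x : Fin (2*k)) : Fin k := ⟨x.val / 2, by have := x.isLt; omega⟩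

lemma dv_eo (i : Fin k) : dv (eo i) = i := Fin.ext (by show (2*i.val+1)/2 = i.val; omega)

lemma dv_ee (i : Fin k) : dv (ee i) = i := Fin.ext (by show (2*i.val)/2 = i.val; omega)

lemma odd_decomp {x : Fin (2*k)} (h : x.val % 2 = 1) : x = eo (dv x) :=
  Fin.ext (by show x.val = 2*(x.val/2)+1; omega)

lemma even_decomp {x : Fin (2*k)} (h : x.val % 2 = 0) : x = ee (dv x) :=
  Fin.ext (by show x.val = 2*(x.val/2); omega)

def psiFun (P : Finset (Finset (Fin k))) (x : Fin (2*k)) : Fin (2*k) :=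
  if x.val % 2 = 1 then ee (nxt P (dv x)) else eo (prv P (dv x))

lemma psiFun_eo (i : Fin k) : psiFun P (eo i) = ee (nxt P i) := by
  unfold psiFun
  rw [if_pos (by show (2*i.val+1)%2 = 1; omega), dv_eo]

lemma psiFun_ee (i : Fin k) : psiFun P (ee i) = eo (prv P i) := by
  unfold psiFun
  rw [if_neg (by show ¬ (2*i.val)%2 = 1; omega), dv_ee]

lemma psiFun_invol (hP : IsNCPartition P) : Function.Involutive (psiFun P) := by
  intro x
  by_cases h : x.val % 2 = 1
  · rw [odd_decomp h, psiFun_eo, psiFun_ee, prv_nxt hP]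
  · rw [even_decomp (x := x) (by omega), psiFun_ee, psiFun_eo, nxt_prv hP]

def psiPerm (P : Finset (Finset (Fin k))) (hP : IsNCPartition P) : Equiv.Perm (Fin (2*k)) :=
  Function.Involutive.toPerm _ (psiFun_invol hP)

lemma psiPerm_apply (hP : IsNCPartition P) (x : Fin (2*k)) :
    psiPerm P hP x = psiFun P x := rfl

lemma psi_mem_NC2 (hP : IsNCPartition P) : IsNCPairPartition (psiPerm P hP) := by
  refine ⟨?_, psiFun_invol hP, ?_⟩
  · intro r hr
    have hv := congrArg Fin.val hr
    rw [psiPerm_apply] at hv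
    unfold psiFun at hv
    split at hv
    · next h =>
        have h1 : (ee (nxt P (dv r))).val = 2*(nxt P (dv r)).val := rfl
        omega
    · next h =>
        have h1 : (eo (prv P (dv r))).val = 2*(prv P (dv r)).val+1 := rfl
        omega
  · rintro ⟨a, b, c, d, hab, hbc, hcd, hac, hbd⟩
    -- ha, hb: parity of a and b
    by_cases ha : a.val % 2 = 1
    · -- a odd: pair (2i+1, 2 nxt i) with i < nxt i
      have hadec := odd_decomp ha
      set i := dv a with hi
      have hcval : c = ee (nxt P i) := by
        rw [← hac, hadec, psiPerm_apply, psiFun_eo]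
      have hiv : a.val = 2*i.val+1 := congrArg Fin.val hadec
      have hcv : c.val = 2*(nxt P i).val := congrArg Fin.val hcval
      have hilt : i < nxt P i := by
        have : a.val < c.val := lt_trans hab (lt_trans hbc (lt_of_le_of_lt le_rfl hcd)) |> fun _ => lt_trans hab hbc
        have hac' : a.val < c.val := lt_trans (hab : a.val < b.val) (hbc : b.val < c.val)
        show i.val < (nxt P i).val
        omega
      by_cases hb : b.val % 2 = 1
      · -- b odd
        have hbdec := odd_decomp hb
        set i' := dv b with hi'
        have hdval : d = ee (nxt P i') := by
          rw [← hbd, hbdec, psiPerm_apply, psiFun_eo]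
        have hbv : b.val = 2*i'.val+1 := congrArg Fin.val hbdec
        have hdv : d.val = 2*(nxt P i').val := congrArg Fin.val hdval
        have e1 : i.val < i'.val := by have := (hab : a.val < b.val); omega
        have e2 : i'.val < (nxt P i).val := by have := (hbc : b.val < c.val); omega
        have e3 : (nxt P i).val < (nxt P i').val := by have := (hcd : c.val < d.val); omega
        by_cases hVW : blk P i = blk P i'
        · have hmem : i' ∈ blk P i := by rw [hVW]; exact mem_blk_self hP i'
          have := nxt_lt_spec hP hilt i' hmem e1
          exact absurd e2 (not_lt.2 this)
        · exact hP.2.2 ⟨i, i', nxt P i, nxt P i', e1, e2, e3,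
            blk P i, blk_mem hP i, blk P i', blk_mem hP i', hVW,
            mem_blk_self hP i, nxt_mem hP i, mem_blk_self hP i', nxt_mem hP i'⟩
      · -- b even: b = 2 nxt i', d = 2 i' + 1 with nxt i' ≤ i'
        have hbdec := even_decomp (x := b) (by omega)
        set j := dv b with hj
        set i' := prv P j with hi'
        have hdval : d = eo i' := by
          rw [← hbd, hbdec, psiPerm_apply, psiFun_ee]
        have hnio : nxt P i' = j := nxt_prv hP j
        have hbv : b.val = 2*(nxt P i').val := by
          rw [hnio]; exact congrArg Fin.val hbdec
        have hdv : d.val = 2*i'.val+1 := congrArg Fin.val hdval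
        have e1 : i.val < (nxt P i').val := by have := (hab : a.val < b.val); omega
        have e2 : (nxt P i').val < (nxt P i).val := by have := (hbc : b.val < c.val); omega
        have e3 : (nxt P i).val ≤ i'.val := by have := (hcd : c.val < d.val); omega
        by_cases hVW : blk P i = blk P i'
        · -- nxt i' in blk i strictly between i and nxt i
          have hmem : nxt P i' ∈ blk P i := by
            rw [hVW, ← blk_nxt hP i']; exact mem_blk_self hP (nxt P i')
          have := nxt_lt_spec hP hilt (nxt P i') hmem e1
          exact absurd e2 (not_lt.2 this)
        · rcases lt_or_eq_of_le e3 with e3' | e3'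
          · exact hP.2.2 ⟨i, nxt P i', nxt P i, i', e1, e2, e3',
              blk P i, blk_mem hP i, blk P i', blk_mem hP i', hVW,
              mem_blk_self hP i, nxt_mem hP i, nxt_mem hP i', mem_blk_self hP i'⟩
          · -- nxt i = i' : common element, blocks equal
            apply hVW
            have : nxt P i = i' := Fin.ext e3'
            rw [← this, blk_nxt hP i]
    · -- a even: a = 2 nxt i, c = 2 i + 1 with nxt i ≤ i
      have hadec := even_decomp (x := a) (by omega)
      set j := dv a with hj
      set i := prv P j with hi
      have hcval : c = eo i := by
        rw [← hac, hadec, psiPerm_apply, psiFun_ee]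
      have hnio : nxt P i = j := nxt_prv hP j
      have hav : a.val = 2*(nxt P i).val := by
        rw [hnio]; exact congrArg Fin.val hadec
      have hcv : c.val = 2*i.val+1 := congrArg Fin.val hcval
      -- nxt i < i since b lies strictly between a and c
      have hilt : (nxt P i).val < i.val := by
        have h1 := (hab : a.val < b.val)
        have h2 := (hbc : b.val < c.val)
        omega
      by_cases hb : b.val % 2 = 1
      · -- b odd: b = 2i'+1, d = 2 nxt i'
        have hbdec := odd_decomp hb
        set i' := dv b with hi'
        have hdval : d = ee (nxt P i') := by
          rw [← hbd, hbdec, psiPerm_apply, psiFun_eo]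
        have hbv : b.val = 2*i'.val+1 := congrArg Fin.val hbdec
        have hdv : d.val = 2*(nxt P i').val := congrArg Fin.val hdval
        have e1 : (nxt P i).val ≤ i'.val := by have := (hab : a.val < b.val); omega
        have e2 : i'.val < i.val := by have := (hbc : b.val < c.val); omega
        have e3 : i.val < (nxt P i').val := by have := (hcd : c.val < d.val); omega
        by_cases hVW : blk P i = blk P i'
        · -- all elements of blk i are ≤ i, but nxt i' ∈ blk i and > i
          have hmem : nxt P i' ∈ blk P i := by
            rw [hVW, ← blk_nxt hP i']; exact mem_blk_self hP (nxt P i')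
          have := (nxt_le_spec hP (le_of_lt hilt)).1 (nxt P i') hmem
          exact absurd e3 (not_lt.2 this)
        · rcases lt_or_eq_of_le e1 with e1' | e1'
          · exact hP.2.2 ⟨nxt P i, i', i, nxt P i', e1', e2, e3,
              blk P i, blk_mem hP i, blk P i', blk_mem hP i', hVW,
              nxt_mem hP i, mem_blk_self hP i, mem_blk_self hP i', nxt_mem hP i'⟩
          · apply hVW
            have : nxt P i = i' := Fin.ext e1'
            rw [← this, blk_nxt hP i]
      · -- b even: b = 2 nxt i', d = 2i'+1
        have hbdec := even_decomp (x := b) (by omega)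
        set j' := dv b with hj'
        set i' := prv P j' with hi'
        have hdval : d = eo i' := by
          rw [← hbd, hbdec, psiPerm_apply, psiFun_ee]
        have hnio' : nxt P i' = j' := nxt_prv hP j'
        have hbv : b.val = 2*(nxt P i').val := by
          rw [hnio']; exact congrArg Fin.val hbdec
        have hdv : d.val = 2*i'.val+1 := congrArg Fin.val hdval
        have e1 : (nxt P i).val < (nxt P i').val := by have := (hab : a.val < b.val); omega
        have e2 : (nxt P i').val ≤ i.val := by have := (hbc : b.val < c.val); omega
        have e3 : i.val < i'.val := by have := (hcd : c.val < d.val); omega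
        by_cases hVW : blk P i = blk P i'
        · have hmem : i' ∈ blk P i := by rw [hVW]; exact mem_blk_self hP i'
          have := (nxt_le_spec hP (le_of_lt hilt)).1 i' hmem
          exact absurd e3 (not_lt.2 this)
        · rcases lt_or_eq_of_le e2 with e2' | e2'
          · exact hP.2.2 ⟨nxt P i, nxt P i', i, i', e1, e2', e3,
              blk P i, blk_mem hP i, blk P i', blk_mem hP i', hVW,
              nxt_mem hP i, mem_blk_self hP i, nxt_mem hP i', mem_blk_self hP i'⟩
          · apply hVW
            have : nxt P i' = i := Fin.ext e2'
            rw [← blk_nxt hP i', this]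

lemma psi_sigma_eo (hP : IsNCPartition P) (i : Fin k) :
    (finRotate (2*k) * psiPerm P hP) (eo i) = eo (nxt P i) := by
  apply Fin.ext
  have h := sigma_val (psiPerm P hP) (eo i)
  rw [psiPerm_apply, psiFun_eo] at h
  have h2 : (ee (nxt P i)).val = 2*(nxt P i).val := rfl
  have h3 : (eo (nxt P i)).val = 2*(nxt P i).val+1 := rfl
  have h4 := (nxt P i).isLt
  rw [h, h2, if_neg (by omega), h3]

lemma psi_sameCycle_eo (hP : IsNCPartition P) (i j : Fin k) :
    (finRotate (2*k) * psiPerm P hP).SameCycle (eo i) (eo j) ↔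
      (npPerm P hP).SameCycle i j :=
  sameCycle_equivariant (npPerm P hP) _ eo eo_inj (fun i => psi_sigma_eo hP i) i j

lemma psi_descSet1 (hP : IsNCPartition P) :
    (descSet k (psiPerm P hP) 1).card
      = (Finset.univ.filter (fun i : Fin k => nxt P i ≤ i)).card := by
  classical
  apply Finset.card_bij (fun x _ => dv x)
  · intro x hx
    rcases Finset.mem_filter.1 hx with ⟨-, hpar, hdesc⟩
    refine Finset.mem_filter.2 ⟨Finset.mem_univ _, ?_⟩
    rw [odd_decomp hpar] at hdesc
    have h1 := congrArg Fin.val (psi_sigma_eo hP (dv x))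
    have h2 : (eo (nxt P (dv x))).val = 2*(nxt P (dv x)).val+1 := rfl
    have h3 : (eo (dv x)).val = 2*(dv x).val+1 := rfl
    show (nxt P (dv x)).val ≤ (dv x).val
    omega
  · intro x hx y hy hxy
    rcases Finset.mem_filter.1 hx with ⟨-, hparx, -⟩
    rcases Finset.mem_filter.1 hy with ⟨-, hpary, -⟩
    rw [odd_decomp hparx, odd_decomp hpary, hxy]
  · intro i hi
    rcases Finset.mem_filter.1 hi with ⟨-, hdesc⟩
    refine ⟨eo i, Finset.mem_filter.2 ⟨Finset.mem_univ _, ?_, ?_⟩, dv_eo i⟩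
    · show (2*i.val+1) % 2 = 1
      omega
    · have h1 := congrArg Fin.val (psi_sigma_eo hP i)
      have h2 : (eo (nxt P i)).val = 2*(nxt P i).val+1 := rfl
      have h3 : (eo i).val = 2*i.val+1 := rfl
      have h4 : (nxt P i).val ≤ i.val := hdesc
      omega

lemma psi_even_ncard (hP : IsNCPartition P) (hk : 0 < k) :
    {c : Set (Fin (2 * k)) |
        c ∈ permCycles (finRotate (2 * k) * psiPerm P hP) ∧
        ∀ y ∈ c, (y : ℕ) % 2 = 0}.ncard = k + 1 - P.card := by
  rw [cycles_ncard (psi_mem_NC2 hP)]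
  have h1 := desc_total (psi_mem_NC2 hP) hk
  have h2 := psi_descSet1 hP
  have h3 := card_blocks hP
  omega

open Classical in
def phiBlk (k : ℕ) (π : Equiv.Perm (Fin (2*k))) (i : Fin k) : Finset (Fin k) :=
  Finset.univ.filter (fun j => (finRotate (2*k) * π).SameCycle (eo i) (eo j))

open Classical in
def phiP (k : ℕ) (π : Equiv.Perm (Fin (2*k))) : Finset (Finset (Fin k)) :=
  Finset.univ.image (phiBlk k π)

section phi

variable {π : Equiv.Perm (Fin (2*k))}

lemma mem_phiBlk {i j : Fin k} :
    j ∈ phiBlk k π i ↔ (finRotate (2*k) * π).SameCycle (eo i) (eo j) := by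
  classical
  simp [phiBlk]

lemma self_mem_phiBlk (i : Fin k) : i ∈ phiBlk k π i :=
  mem_phiBlk.2 (Equiv.Perm.SameCycle.refl _ _)

lemma phiBlk_eq {i j : Fin k} (h : (finRotate (2*k) * π).SameCycle (eo i) (eo j)) :
    phiBlk k π j = phiBlk k π i := by
  ext x
  rw [mem_phiBlk, mem_phiBlk]
  exact ⟨fun hh => h.trans hh, fun hh => h.symm.trans hh⟩

/-- the map `i ↦ π(2i+1)/2` -/
def fD (π : Equiv.Perm (Fin (2*k))) (i : Fin k) : Fin k := dv (π (eo i))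

lemma pi_eo (hπ : IsNCPairPartition π) (i : Fin k) : π (eo i) = ee (fD π i) := by
  have hpar := pair_parity hπ (eo i)
  have h1 : (eo i).val = 2*i.val+1 := rfl
  exact even_decomp (by omega)

lemma sigma_eo (hπ : IsNCPairPartition π) (i : Fin k) :
    (finRotate (2*k) * π) (eo i) = eo (fD π i) := by
  apply Fin.ext
  have h := sigma_val π (eo i)
  rw [pi_eo hπ i] at h
  have h2 : (ee (fD π i)).val = 2*(fD π i).val := rfl
  have h3 : (eo (fD π i)).val = 2*(fD π i).val+1 := rfl
  have h4 := (fD π i).isLt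
  rw [h, h2, if_neg (by omega), h3]

lemma fD_mem_phiBlk (hπ : IsNCPairPartition π) (i : Fin k) : fD π i ∈ phiBlk k π i :=
  mem_phiBlk.2 ⟨1, by rw [zpow_one]; exact sigma_eo hπ i⟩

/-- the increasing-cycle property transferred to `fD` -/
lemma f_min (hπ : IsNCPairPartition π) {i j : Fin k}
    (hsc : (finRotate (2*k) * π).SameCycle (eo i) (eo j)) (hij : j ≠ i) :
    ¬ Cyc i.val (fD π i).val j.val := by
  intro hc
  have hne : eo j ≠ eo i := fun h => hij (eo_inj h)
  apply no_between hπ (eo i) (eo j) hsc hne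
  rw [sigma_eo hπ i]
  have h1 : (eo i).val = 2*i.val+1 := rfl
  have h2 : (eo j).val = 2*j.val+1 := rfl
  have h3 : (eo (fD π i)).val = 2*(fD π i).val+1 := rfl
  unfold Cyc at *
  omega

lemma phi_partition (hπ : IsNCPairPartition π) : IsNCPartition (phiP k π) := by
  classical
  refine ⟨?_, ?_, ?_⟩
  · intro V hV
    obtain ⟨i, -, rfl⟩ := Finset.mem_image.1 hV
    exact ⟨i, self_mem_phiBlk i⟩
  · intro x
    refine ⟨phiBlk k π x, ⟨Finset.mem_image.2 ⟨x, Finset.mem_univ _, rfl⟩,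
      self_mem_phiBlk x⟩, ?_⟩
    rintro V ⟨hV, hxV⟩
    obtain ⟨i, -, rfl⟩ := Finset.mem_image.1 hV
    exact (phiBlk_eq (mem_phiBlk.1 hxV)).symm
  · rintro ⟨a, b, c, d, hab, hbc, hcd, V, hV, W, hW, hVW, haV, hcV, hbW, hdW⟩
    obtain ⟨va, -, rfl⟩ := Finset.mem_image.1 hV
    obtain ⟨wa, -, rfl⟩ := Finset.mem_image.1 hW
    -- replace the blocks by blocks based at members
    rw [← phiBlk_eq (mem_phiBlk.1 haV)] at hcV hVW
    rw [← phiBlk_eq (mem_phiBlk.1 hbW)] at hdW hVW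
    set V' := phiBlk k π a with hV'
    set W' := phiBlk k π b with hW'
    have hdisj : ∀ z : Fin k, z ∈ V' → z ∈ W' → False := by
      intro z hz1 hz2
      exact hVW ((phiBlk_eq (mem_phiBlk.1 hz1)).symm.trans (phiBlk_eq (mem_phiBlk.1 hz2)))
    -- the maximal element of V' below b
    have hneV : (V'.filter (fun y => y < b)).Nonempty :=
      ⟨a, Finset.mem_filter.2 ⟨self_mem_phiBlk a, hab⟩⟩
    set x := (V'.filter (fun y => y < b)).max' hneV with hx
    have hxV : x ∈ V' := (Finset.mem_filter.1 (Finset.max'_mem _ hneV)).1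
    have hxb : x < b := (Finset.mem_filter.1 (Finset.max'_mem _ hneV)).2
    have hxmax : ∀ y ∈ V', y < b → y ≤ x := by
      intro y hy hyb
      have hm : y ∈ V'.filter (fun w => w < b) := Finset.mem_filter.2 ⟨hy, hyb⟩
      exact Finset.le_max' _ _ hm
    have hscx : ∀ z ∈ V', (finRotate (2*k) * π).SameCycle (eo x) (eo z) := by
      intro z hz
      exact (mem_phiBlk.1 hxV).symm.trans (mem_phiBlk.1 hz)
    have hfxV : fD π x ∈ V' := by
      have := fD_mem_phiBlk hπ x
      rw [phiBlk_eq (mem_phiBlk.1 hxV)] at this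
      exact this
    have hcval : x < c := lt_trans hxb hbc
    have hxf : x.val < (fD π x).val := by
      by_contra hle
      have hcx : c ≠ x := by
        intro h
        rw [h] at hcval
        exact absurd hcval (lt_irrefl _)
      have := f_min hπ (hscx c hcV) hcx
      unfold Cyc at this
      have h1 : x.val < c.val := hcval
      omega
    have hbf : b.val < (fD π x).val := by
      rcases lt_trichotomy (fD π x).val b.val with h | h | h
      · have h2 := hxmax (fD π x) hfxV h
        have h3 : (fD π x).val ≤ x.val := h2
        omega
      · exfalso
        have he : fD π x = b := Fin.ext h
        exact hdisj (fD π x) hfxV (by rw [he]; exact self_mem_phiBlk b)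
      · exact h
    have hfc : (fD π x).val ≤ c.val := by
      by_cases hcx : c = x
      · rw [hcx] at hbc; exact absurd hbc (not_lt.2 (le_of_lt hxb))
      · have := f_min hπ (hscx c hcV) hcx
        unfold Cyc at this
        have h1 : x.val < c.val := hcval
        omega
    -- the maximal element of W' below fD π x
    have hneW : (W'.filter (fun y => y.val < (fD π x).val)).Nonempty :=
      ⟨b, Finset.mem_filter.2 ⟨self_mem_phiBlk b, hbf⟩⟩
    set y := (W'.filter (fun w => w.val < (fD π x).val)).max' hneW with hy
    have hyW : y ∈ W' := (Finset.mem_filter.1 (Finset.max'_mem _ hneW)).1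
    have hyf : y.val < (fD π x).val := (Finset.mem_filter.1 (Finset.max'_mem _ hneW)).2
    have hby : b ≤ y := Finset.le_max' _ _ (Finset.mem_filter.2 ⟨self_mem_phiBlk b, hbf⟩)
    have hymax : ∀ w ∈ W', w.val < (fD π x).val → w ≤ y := by
      intro w hw hwf
      have hm : w ∈ W'.filter (fun u => u.val < (fD π x).val) := Finset.mem_filter.2 ⟨hw, hwf⟩
      exact Finset.le_max' _ _ hm
    have hscy : ∀ z ∈ W', (finRotate (2*k) * π).SameCycle (eo y) (eo z) := by
      intro z hz
      exact (mem_phiBlk.1 hyW).symm.trans (mem_phiBlk.1 hz)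
    have hfyW : fD π y ∈ W' := by
      have := fD_mem_phiBlk hπ y
      rw [phiBlk_eq (mem_phiBlk.1 hyW)] at this
      exact this
    have hyd : y.val < d.val := by
      have h1 : c.val < d.val := hcd
      omega
    have hyf2 : y.val < (fD π y).val := by
      by_contra hle
      have hdy : d ≠ y := fun h => by rw [h] at hyd; omega
      have := f_min hπ (hscy d hdW) hdy
      unfold Cyc at this
      omega
    have hffy : (fD π x).val < (fD π y).val := by
      rcases lt_trichotomy (fD π y).val (fD π x).val with h | h | h
      · have h2 := hymax (fD π y) hfyW h
        have h3 : (fD π y).val ≤ y.val := h2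
        omega
      · exfalso
        have he : fD π y = fD π x := Fin.ext h
        exact hdisj (fD π x) hfxV (he ▸ hfyW)
      · exact h
    -- now the two chords cross
    apply hπ.2.2
    refine ⟨eo x, eo y, ee (fD π x), ee (fD π y), ?_, ?_, ?_, pi_eo hπ x, pi_eo hπ y⟩
    · show 2*x.val+1 < 2*y.val+1
      have : x.val < b.val := hxb
      have : b.val ≤ y.val := hby
      omega
    · show 2*y.val+1 < 2*(fD π x).val
      omega
    · show 2*(fD π x).val < 2*(fD π y).val
      omega

lemma phi_nxt (hπ : IsNCPairPartition π) (i : Fin k) : nxt (phiP k π) i = fD π i := by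
  classical
  have hP := phi_partition hπ
  have hblk : blk (phiP k π) i = phiBlk k π i :=
    blk_eq_of_mem hP (Finset.mem_image.2 ⟨i, Finset.mem_univ _, rfl⟩) (self_mem_phiBlk i)
  rcases lt_or_ge i (fD π i) with h | h
  · -- successor case
    have hmem : fD π i ∈ (blk (phiP k π) i).filter (fun y => i < y) := by
      rw [hblk]
      exact Finset.mem_filter.2 ⟨fD_mem_phiBlk hπ i, h⟩
    have hne : ((blk (phiP k π) i).filter (fun y => i < y)).Nonempty := ⟨_, hmem⟩
    have hmin : ∀ y ∈ (blk (phiP k π) i).filter (fun y => i < y), fD π i ≤ y := by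
      intro y hyf
      rcases Finset.mem_filter.1 hyf with ⟨hy, hiy⟩
      rw [hblk] at hy
      by_cases hyi : y = fD π i
      · rw [hyi]
      · have hyi2 : y ≠ i := ne_of_gt hiy
        have := f_min hπ (mem_phiBlk.1 hy) hyi2
        unfold Cyc at this
        have h1 : i.val < y.val := hiy
        have h2 : i.val < (fD π i).val := h
        show (fD π i).val ≤ y.val
        omega
    unfold nxt
    rw [dif_pos hne]
    exact le_antisymm (Finset.min'_le _ _ hmem) (Finset.le_min' _ _ _ hmin)
  · -- wrap case: fD π i is the minimum, i the maximum
    have hprop : ∀ y ∈ blk (phiP k π) i, y ≤ i ∧ fD π i ≤ y := by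
      intro y hy
      rw [hblk] at hy
      by_cases hyi : y = i
      · subst hyi
        exact ⟨le_refl _, h⟩
      · by_cases hyf : y = fD π i
        · subst hyf
          exact ⟨h, le_refl _⟩
        · have := f_min hπ (mem_phiBlk.1 hy) hyi
          unfold Cyc at this
          have h1 : (fD π i).val ≤ i.val := h
          have h2 : y.val ≠ i.val := fun hh => hyi (Fin.ext hh)
          have h3 : y.val ≠ (fD π i).val := fun hh => hyf (Fin.ext hh)
          constructor
          · show y.val ≤ i.val
            omega
          · show (fD π i).val ≤ y.val
            omega
    have hemp : ¬ ((blk (phiP k π) i).filter (fun y => i < y)).Nonempty := by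
      rintro ⟨y, hyf⟩
      rcases Finset.mem_filter.1 hyf with ⟨hy, hiy⟩
      exact absurd (hprop y hy).1 (not_le.2 hiy)
    have hne2 : (blk (phiP k π) i).Nonempty := ⟨i, by rw [hblk]; exact self_mem_phiBlk i⟩
    unfold nxt
    rw [dif_neg hemp, dif_pos hne2]
    apply le_antisymm
    · apply Finset.min'_le
      rw [hblk]
      exact fD_mem_phiBlk hπ i
    · apply Finset.le_min'
      intro y hy
      exact (hprop y hy).2

lemma psi_phi (hπ : IsNCPairPartition π) (h : IsNCPartition (phiP k π)) :
    psiPerm (phiP k π) h = π := by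
  apply Equiv.ext
  intro x
  have hodd : ∀ z : Fin (2*k), z.val % 2 = 1 → psiPerm (phiP k π) h z = π z := by
    intro z hz
    rw [odd_decomp hz, psiPerm_apply, psiFun_eo, phi_nxt hπ, ← pi_eo hπ]
  by_cases hx : x.val % 2 = 1
  · exact hodd x hx
  · set u := π x with hu
    have hux : π u = x := hπ.2.1 x
    have hupar : u.val % 2 = 1 := by
      have := pair_parity hπ x
      omega
    have h1 : psiPerm (phiP k π) h u = x := by rw [hodd u hupar, hux]
    have h2 : psiPerm (phiP k π) h (psiPerm (phiP k π) h u) = u := psiFun_invol h u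
    rw [h1] at h2
    rw [h2]

lemma phi_psi (hP : IsNCPartition P) : phiP k (psiPerm P hP) = P := by
  classical
  have hb : ∀ i : Fin k, phiBlk k (psiPerm P hP) i = blk P i := by
    intro i
    ext j
    rw [mem_phiBlk, psi_sameCycle_eo hP, sameCycle_np_iff hP]
  ext V
  simp only [phiP, Finset.mem_image, Finset.mem_univ, true_and]
  constructor
  · rintro ⟨i, rfl⟩
    rw [hb]
    exact blk_mem hP i
  · intro hV
    obtain ⟨x, hx⟩ := hP.1 V hV
    exact ⟨x, by rw [hb, blk_eq_of_mem hP hV hx]⟩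

end phi

end psi

end Stmt16Aux


open Classical in
/-- With `Fin (2*k)` representing `{1, …, 2k}` (so position `x` is the number `x + 1`,
which is odd iff `(x : ℕ) % 2 = 0`), the number of non-crossing pair partitions `π` of
`{1, …, 2k}` such that `γ ∘ π` has exactly `m + 1` cycles consisting entirely of odd
numbers equals the number of non-crossing partitions of `{1, …, k}` with exactly `k - m`
blocks. -/
theorem stmt16 (k m : ℕ) (hk : 1 ≤ k) (hm : m ≤ k - 1) :
    ((NC2 (2 * k)).filter (fun π =>
        {c : Set (Fin (2 * k)) |
            c ∈ permCycles (finRotate (2 * k) * π) ∧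
            ∀ y ∈ c, (y : ℕ) % 2 = 0}.ncard = m + 1)).card =
      ((NCset k).filter (fun P => P.card = k - m)).card := by
  classical
  have hk2 : 0 < k := hk
  refine Finset.card_bij' (fun π _ => Stmt16Aux.phiP k π)
    (fun P hP => Stmt16Aux.psiPerm P (Finset.mem_filter.1 (Finset.mem_filter.1 hP).1).2)
    ?_ ?_ ?_ ?_
  · intro π hπm
    obtain ⟨hmem, hcyc⟩ := Finset.mem_filter.1 hπm
    have hπ : IsNCPairPartition π := (Finset.mem_filter.1 hmem).2
    have hQ := Stmt16Aux.phi_partition hπ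
    refine Finset.mem_filter.2 ⟨Finset.mem_filter.2 ⟨Finset.mem_univ _, hQ⟩, ?_⟩
    have hψ := Stmt16Aux.psi_phi hπ hQ
    have h1 := Stmt16Aux.psi_descSet1 hQ
    rw [hψ] at h1
    have h2 := Stmt16Aux.card_blocks hQ
    have h3 := Stmt16Aux.desc_total hπ hk2
    have h4 := Stmt16Aux.cycles_ncard hπ
    rw [hcyc] at h4
    show (Stmt16Aux.phiP k π).card = k - m
    omega
  · intro P hPm
    obtain ⟨hmem, hcard⟩ := Finset.mem_filter.1 hPm
    have hNC : IsNCPartition P := (Finset.mem_filter.1 hmem).2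
    refine Finset.mem_filter.2 ⟨Finset.mem_filter.2
      ⟨Finset.mem_univ _, Stmt16Aux.psi_mem_NC2 hNC⟩, ?_⟩
    rw [Stmt16Aux.psi_even_ncard hNC hk2, hcard]
    omega
  · intro π hπm
    have hπ : IsNCPairPartition π :=
      (Finset.mem_filter.1 (Finset.mem_filter.1 hπm).1).2
    exact Stmt16Aux.psi_phi hπ _
  · intro P hPm
    have hNC : IsNCPartition P :=
      (Finset.mem_filter.1 (Finset.mem_filter.1 hPm).1).2
    exact Stmt16Aux.phi_psi hNC
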